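/- For every integer n ≥ 3, the maximum running time of the K_4-bootstrap percolation process satisfies M_4(n) ≥ n − 3; moreover for every n ≥ 4 there is a graph G on n vertices such that the K_4-bootstrap process starting from G stabilizes at time exactly n − 3 and G_{n−3} = K_n. -/

import Mathlib

def bootStep {V : Type*} (r : ℕ) (G : SimpleGraph V) : SimpleGraph V where
  Adj u v := G.Adj u v ∨ (u ≠ v ∧ ∃ S : Finset V, S.card = r ∧ u ∈ S ∧ v ∈ S ∧
    ∀ x ∈ S, ∀ y ∈ S, x ≠ y → ¬((x = u ∧ y = v) ∨ (x = v ∧ y = u)) → G.Adj x y)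
  symm := by
    constructor
    intro a b h
    rcases h with h | ⟨hne, S, hS, ha, hb, hall⟩
    · exact Or.inl h.symm
    · refine Or.inr ⟨hne.symm, S, hS, hb, ha, ?_⟩
      intro x hx y hy hxy hno
      exact hall x hx y hy hxy (by tauto)
  loopless := by
    constructor
    intro a h
    rcases h with h | ⟨hne, _⟩
    · exact G.irrefl h
    · exact hne rfl

noncomputable def maxRunTime (r n : ℕ) : ℕ :=
  sSup {t | ∃ G : SimpleGraph (Fin n), (bootStep r)^[t] G ≠ (bootStep r)^[t - 1] G}

section helpers
variable {V : Type*} {r : ℕ}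

lemma le_bootStep (G : SimpleGraph V) : G ≤ bootStep r G := fun _ _ h => Or.inl h

lemma iter_le_succ (G : SimpleGraph V) (t : ℕ) :
    (bootStep r)^[t] G ≤ (bootStep r)^[t + 1] G := by
  rw [Function.iterate_succ_apply']
  exact le_bootStep _

lemma iter_mono (G : SimpleGraph V) : Monotone (fun t => (bootStep r)^[t] G) :=
  monotone_nat_of_le_succ (iter_le_succ G)

lemma iter_fix (G : SimpleGraph V) {s : ℕ}
    (h : (bootStep r)^[s + 1] G = (bootStep r)^[s] G) :
    ∀ t, s ≤ t → (bootStep r)^[t] G = (bootStep r)^[s] G := by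
  intro t ht
  induction t with
  | zero =>
      have : s = 0 := by omega
      rw [this]
  | succ t ih =>
      rcases Nat.lt_or_ge s (t + 1) with h1 | h1
      · have hst : s ≤ t := by omega
        rw [Function.iterate_succ_apply', ih hst]
        calc bootStep r ((bootStep r)^[s] G) = (bootStep r)^[s+1] G :=
              (Function.iterate_succ_apply' _ _ _).symm
          _ = (bootStep r)^[s] G := h
      · have : s = t + 1 := by omega
        rw [this]

end helpers

lemma iter_fix_zero {V : Type*} {r : ℕ} (G : SimpleGraph V) {s : ℕ}
    (h : (bootStep r)^[s + 1] G = (bootStep r)^[s] G) :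
    ∀ t, s ≤ t → (bootStep r)^[t] G = (bootStep r)^[s] G := iter_fix G h

def csEmb {n : ℕ} : Fin n ↪ Fin (n + 1) := ⟨Fin.castSucc, Fin.castSucc_injective n⟩

/-- Extend a graph on `Fin n` by a new vertex (`Fin.last n`) joined exactly to `a` and `b`. -/
def extGraph {n : ℕ} (a b : Fin n) (H : SimpleGraph (Fin n)) : SimpleGraph (Fin (n + 1)) where
  Adj u v := (∃ x y : Fin n, H.Adj x y ∧ u = x.castSucc ∧ v = y.castSucc) ∨
    (u = Fin.last n ∧ (v = a.castSucc ∨ v = b.castSucc)) ∨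
    (v = Fin.last n ∧ (u = a.castSucc ∨ u = b.castSucc))
  symm := by
    constructor
    intro u v h
    rcases h with ⟨x, y, hxy, hu, hv⟩ | h | h
    · exact Or.inl ⟨y, x, hxy.symm, hv, hu⟩
    · exact Or.inr (Or.inr h)
    · exact Or.inr (Or.inl h)
  loopless := by
    constructor
    intro u h
    rcases h with ⟨x, y, hxy, hu, hv⟩ | ⟨hu, hv⟩ | ⟨hu, hv⟩
    · subst hu
      have : x = y := Fin.castSucc_injective _ hv
      exact hxy.ne this
    · subst hu
      rcases hv with hv | hv <;> exact (Fin.castSucc_lt_last _).ne hv.symm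
    · subst hu
      rcases hv with hv | hv <;> exact (Fin.castSucc_lt_last _).ne hv.symm

variable {n : ℕ} {a b : Fin n} {H H' : SimpleGraph (Fin n)}

lemma ext_adj_cast {x y : Fin n} :
    (extGraph a b H).Adj x.castSucc y.castSucc ↔ H.Adj x y := by
  constructor
  · rintro (⟨p, q, hpq, hp, hq⟩ | ⟨h, _⟩ | ⟨h, _⟩)
    · obtain rfl : x = p := Fin.castSucc_injective _ hp
      obtain rfl : y = q := Fin.castSucc_injective _ hq
      exact hpq
    · exact absurd h (Fin.castSucc_lt_last x).ne
    · exact absurd h (Fin.castSucc_lt_last y).ne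
  · intro h
    exact Or.inl ⟨x, y, h, rfl, rfl⟩

lemma ext_adj_last {v : Fin (n + 1)} :
    (extGraph a b H).Adj (Fin.last n) v ↔ (v = a.castSucc ∨ v = b.castSucc) := by
  constructor
  · rintro (⟨p, q, _, hp, _⟩ | ⟨_, h⟩ | ⟨_, h⟩)
    · exact absurd hp.symm (Fin.castSucc_lt_last p).ne
    · exact h
    · rcases h with h | h <;> exact absurd h.symm (Fin.castSucc_lt_last _).ne
  · intro h
    exact Or.inr (Or.inl ⟨rfl, h⟩)

lemma ext_mono (hHH' : H ≤ H') : extGraph a b H ≤ extGraph a b H' := by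
  intro u v h
  rcases h with ⟨x, y, hxy, hu, hv⟩ | h | h
  · exact Or.inl ⟨x, y, hHH' hxy, hu, hv⟩
  · exact Or.inr (Or.inl h)
  · exact Or.inr (Or.inr h)

lemma bootStep_ext (hab : ¬ H.Adj a b) :
    bootStep 4 (extGraph a b H) = extGraph a b (bootStep 4 H) := by
  apply le_antisymm
  · -- hard direction
    intro u v h
    rcases h with h | ⟨huv, S, hS4, huS, hvS, hall⟩
    · exact ext_mono (le_bootStep H) h
    · by_cases hlS : Fin.last n ∈ S
      · exfalso
        have hnbr : ∀ z ∈ S, z ≠ Fin.last n →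
            ¬((Fin.last n = u ∧ z = v) ∨ (Fin.last n = v ∧ z = u)) →
            z = a.castSucc ∨ z = b.castSucc := by
          intro z hz hzl hno
          exact ext_adj_last.1 (hall _ hlS _ hz (Ne.symm hzl) hno)
        have two_w : 2 ≤ (S \ {u, v}).card := by
          have h1 := Finset.le_card_sdiff ({u, v} : Finset (Fin (n + 1))) S
          have h2 : ({u, v} : Finset (Fin (n + 1))).card ≤ 2 :=
            (Finset.card_insert_le _ _).trans (by simp)
          omega
        rcases eq_or_ne u (Fin.last n) with rfl | hul
        · -- u = last
          have hvl : v ≠ Fin.last n := fun h => huv h.symm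
          obtain ⟨w₁, hw₁⟩ := Finset.card_pos.1 (by omega : 0 < (S \ {Fin.last n, v}).card)
          obtain ⟨w₂, hw₂, hw₂₁⟩ :=
            Finset.exists_mem_ne (s := S \ {Fin.last n, v}) (by omega) w₁
          rw [Finset.mem_sdiff, Finset.mem_insert, Finset.mem_singleton] at hw₁ hw₂
          push_neg at hw₁ hw₂
          obtain ⟨hw₁S, hw₁u, hw₁v⟩ := hw₁
          obtain ⟨hw₂S, hw₂u, hw₂v⟩ := hw₂
          have h₁ := hnbr w₁ hw₁S hw₁u (by rintro (⟨_, h⟩ | ⟨h, _⟩); exacts [hw₁v h, hvl h.symm])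
          have h₂ := hnbr w₂ hw₂S hw₂u (by rintro (⟨_, h⟩ | ⟨h, _⟩); exacts [hw₂v h, hvl h.symm])
          have hadj : (extGraph a b H).Adj w₁ w₂ := by
            refine hall _ hw₁S _ hw₂S hw₂₁.symm ?_
            rintro (⟨h, _⟩ | ⟨_, h⟩); exacts [hw₁u h, hw₂u h]
          rcases h₁ with rfl | rfl <;> rcases h₂ with rfl | rfl
          · exact hw₂₁ rfl
          · exact hab (ext_adj_cast.1 hadj)
          · exact hab (ext_adj_cast.1 hadj).symm
          · exact hw₂₁ rfl
        · rcases eq_or_ne v (Fin.last n) with rfl | hvl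
          · -- v = last
            obtain ⟨w₁, hw₁⟩ := Finset.card_pos.1 (by omega : 0 < (S \ {u, Fin.last n}).card)
            obtain ⟨w₂, hw₂, hw₂₁⟩ :=
              Finset.exists_mem_ne (s := S \ {u, Fin.last n}) (by omega) w₁
            rw [Finset.mem_sdiff, Finset.mem_insert, Finset.mem_singleton] at hw₁ hw₂
            push_neg at hw₁ hw₂
            obtain ⟨hw₁S, hw₁u, hw₁v⟩ := hw₁
            obtain ⟨hw₂S, hw₂u, hw₂v⟩ := hw₂
            have h₁ := hnbr w₁ hw₁S hw₁v (by rintro (⟨h, _⟩ | ⟨_, h⟩); exacts [hul h.symm, hw₁u h])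
            have h₂ := hnbr w₂ hw₂S hw₂v (by rintro (⟨h, _⟩ | ⟨_, h⟩); exacts [hul h.symm, hw₂u h])
            have hadj : (extGraph a b H).Adj w₁ w₂ := by
              refine hall _ hw₁S _ hw₂S hw₂₁.symm ?_
              rintro (⟨h, _⟩ | ⟨_, h⟩); exacts [hw₁u h, hw₂u h]
            rcases h₁ with rfl | rfl <;> rcases h₂ with rfl | rfl
            · exact hw₂₁ rfl
            · exact hab (ext_adj_cast.1 hadj)
            · exact hab (ext_adj_cast.1 hadj).symm
            · exact hw₂₁ rfl
          · -- u, v both ≠ last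
            have one_w : 1 ≤ (S \ {u, v, Fin.last n}).card := by
              have h1 := Finset.le_card_sdiff ({u, v, Fin.last n} : Finset (Fin (n + 1))) S
              have h2 : ({u, v, Fin.last n} : Finset (Fin (n + 1))).card ≤ 3 :=
                Finset.card_le_three
              omega
            obtain ⟨w, hw⟩ := Finset.card_pos.1 (by omega : 0 < (S \ {u, v, Fin.last n}).card)
            rw [Finset.mem_sdiff, Finset.mem_insert, Finset.mem_insert, Finset.mem_singleton] at hw
            push_neg at hw
            obtain ⟨hwS, hwu, hwv, hwl⟩ := hw
            have hu' := hnbr u huS hul (by rintro (⟨h, _⟩ | ⟨h, _⟩); exacts [hul h.symm, hvl h.symm])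
            have hv' := hnbr v hvS hvl (by rintro (⟨h, _⟩ | ⟨h, _⟩); exacts [hul h.symm, hvl h.symm])
            have hw' := hnbr w hwS hwl (by rintro (⟨h, _⟩ | ⟨h, _⟩); exacts [hul h.symm, hvl h.symm])
            rcases hu' with rfl | rfl <;> rcases hv' with rfl | rfl <;> rcases hw' with h | h <;>
              first
                | exact huv rfl
                | exact hwu h
                | exact hwv h
      · -- last ∉ S : lift everything to Fin n
        have hsub : S ⊆ Finset.univ.map (csEmb (n := n)) := by
          intro z hz
          have hzl : z ≠ Fin.last n := fun h => hlS (h ▸ hz)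
          obtain ⟨y, hy⟩ := Fin.exists_castSucc_eq.2 hzl
          exact Finset.mem_map.2 ⟨y, Finset.mem_univ _, hy⟩
        obtain ⟨S', -, rfl⟩ := Finset.subset_map_iff.1 hsub
        obtain ⟨u', hu'S, rfl⟩ := Finset.mem_map.1 huS
        obtain ⟨v', hv'S, rfl⟩ := Finset.mem_map.1 hvS
        have hne' : u' ≠ v' := fun h => huv (by rw [h])
        refine Or.inl ⟨u', v', Or.inr ⟨hne', S', ?_, hu'S, hv'S, ?_⟩, rfl, rfl⟩
        · rwa [Finset.card_map] at hS4
        · intro x hx y hy hxy hno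
          have := hall (csEmb x) (Finset.mem_map_of_mem _ hx) (csEmb y)
            (Finset.mem_map_of_mem _ hy) (fun h => hxy (csEmb.injective h)) ?_
          · exact ext_adj_cast.1 this
          · rintro (⟨h1, h2⟩ | ⟨h1, h2⟩)
            · exact hno (Or.inl ⟨csEmb.injective h1, csEmb.injective h2⟩)
            · exact hno (Or.inr ⟨csEmb.injective h1, csEmb.injective h2⟩)
  · -- easy direction
    intro u v h
    rcases h with ⟨x, y, hxy, rfl, rfl⟩ | h
    · rcases hxy with hxy | ⟨hxyne, S, hS4, hxS, hyS, hall⟩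
      · exact Or.inl (ext_adj_cast.2 hxy)
      · refine Or.inr ⟨fun h => hxyne (Fin.castSucc_injective _ h),
          S.map (csEmb (n := n)), by rw [Finset.card_map, hS4],
          Finset.mem_map_of_mem _ hxS, Finset.mem_map_of_mem _ hyS, ?_⟩
        intro p hp q hq hpq hno
        obtain ⟨p', hp'S, rfl⟩ := Finset.mem_map.1 hp
        obtain ⟨q', hq'S, rfl⟩ := Finset.mem_map.1 hq
        refine ext_adj_cast.2 (hall p' hp'S q' hq'S (fun h => hpq (by rw [h])) ?_)
        rintro (⟨h1, h2⟩ | ⟨h1, h2⟩)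
        · exact hno (Or.inl ⟨by rw [h1]; rfl, by rw [h2]; rfl⟩)
        · exact hno (Or.inr ⟨by rw [h1]; rfl, by rw [h2]; rfl⟩)
    · exact Or.inl (Or.inr h)

lemma bootStep_ext_top (hab : a ≠ b) :
    bootStep 4 (extGraph a b (⊤ : SimpleGraph (Fin n))) = ⊤ := by
  rw [← top_le_iff]
  intro u v huv
  have huvne : u ≠ v := huv.ne
  -- helper : the new vertex gets joined to every old vertex in one step
  have key : ∀ x : Fin n,
      (bootStep 4 (extGraph a b (⊤ : SimpleGraph (Fin n)))).Adj (Fin.last n) x.castSucc := by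
    intro x
    rcases eq_or_ne x a with rfl | hxa
    · exact Or.inl (ext_adj_last.2 (Or.inl rfl))
    rcases eq_or_ne x b with rfl | hxb
    · exact Or.inl (ext_adj_last.2 (Or.inr rfl))
    refine Or.inr ⟨(Fin.castSucc_lt_last x).ne', ?_⟩
    refine ⟨{Fin.last n, a.castSucc, b.castSucc, x.castSucc}, ?_, ?_, ?_, ?_⟩
    · have h1 : a.castSucc ≠ b.castSucc := fun h => hab (Fin.castSucc_injective _ h)
      have h2 : a.castSucc ≠ x.castSucc := fun h => hxa (Fin.castSucc_injective _ h).symm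
      have h3 : b.castSucc ≠ x.castSucc := fun h => hxb (Fin.castSucc_injective _ h).symm
      have h4 : Fin.last n ∉ ({a.castSucc, b.castSucc, x.castSucc} : Finset (Fin (n+1))) := by
        simp only [Finset.mem_insert, Finset.mem_singleton]
        push_neg
        exact ⟨(Fin.castSucc_lt_last a).ne', (Fin.castSucc_lt_last b).ne',
          (Fin.castSucc_lt_last x).ne'⟩
      rw [Finset.card_insert_of_notMem h4, Finset.card_insert_of_notMem
          (by simp only [Finset.mem_insert, Finset.mem_singleton]; push_neg; exact ⟨h1, h2⟩),
        Finset.card_insert_of_notMem (by simpa using h3), Finset.card_singleton]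
    · exact Finset.mem_insert_self _ _
    · simp
    · intro p hp q hq hpq hno
      simp only [Finset.mem_insert, Finset.mem_singleton] at hp hq
      have hadj : ∀ s t : Fin n, s ≠ t → (extGraph a b (⊤ : SimpleGraph (Fin n))).Adj
          s.castSucc t.castSucc := fun s t hst => ext_adj_cast.2 hst
      rcases hp with rfl | rfl | rfl | rfl <;> rcases hq with rfl | rfl | rfl | rfl
      · exact absurd rfl hpq
      · exact ext_adj_last.2 (Or.inl rfl)
      · exact ext_adj_last.2 (Or.inr rfl)
      · exact absurd (Or.inl ⟨rfl, rfl⟩) hno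
      · exact (ext_adj_last.2 (Or.inl rfl)).symm
      · exact absurd rfl hpq
      · exact hadj _ _ hab
      · exact hadj _ _ (fun h => hxa h.symm)
      · exact (ext_adj_last.2 (Or.inr rfl)).symm
      · exact hadj _ _ hab.symm
      · exact absurd rfl hpq
      · exact hadj _ _ (fun h => hxb h.symm)
      · exact absurd (Or.inr ⟨rfl, rfl⟩) hno
      · exact hadj _ _ hxa
      · exact hadj _ _ hxb
      · exact absurd rfl hpq
  rcases eq_or_ne u (Fin.last n) with rfl | hul
  · have hvl : v ≠ Fin.last n := huvne.symm
    obtain ⟨y, rfl⟩ := Fin.exists_castSucc_eq.2 hvl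
    exact key y
  · obtain ⟨x, rfl⟩ := Fin.exists_castSucc_eq.2 hul
    rcases eq_or_ne v (Fin.last n) with rfl | hvl
    · exact (key x).symm
    · obtain ⟨y, rfl⟩ := Fin.exists_castSucc_eq.2 hvl
      refine Or.inl (ext_adj_cast.2 ?_)
      simpa using fun h => huvne (by rw [h])

lemma ext_top_ne_top (hn : 3 ≤ n) :
    extGraph a b (⊤ : SimpleGraph (Fin n)) ≠ ⊤ := by
  have hex : ∃ c : Fin n, c ≠ a ∧ c ≠ b := by
    by_contra hc
    push_neg at hc
    have hsub : (Finset.univ : Finset (Fin n)) ⊆ {a, b} := by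
      intro c _
      rcases eq_or_ne c a with rfl | h
      · exact Finset.mem_insert_self _ _
      · simp [hc c h]
    have := Finset.card_le_card hsub
    have h2 : ({a, b} : Finset (Fin n)).card ≤ 2 :=
      (Finset.card_insert_le _ _).trans (by simp)
    simp [Finset.card_univ] at this
    omega
  obtain ⟨c, hca, hcb⟩ := hex
  intro h
  have : (extGraph a b (⊤ : SimpleGraph (Fin n))).Adj (Fin.last n) c.castSucc := by
    rw [h]
    exact (Fin.castSucc_lt_last c).ne'
  rcases ext_adj_last.1 this with h' | h'
  · exact hca (Fin.castSucc_injective _ h')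
  · exact hcb (Fin.castSucc_injective _ h')

/-- `K₄` minus the edge `{0,1}`. -/
def g4 : SimpleGraph (Fin 4) where
  Adj u v := u ≠ v ∧ ¬(u = 0 ∧ v = 1) ∧ ¬(u = 1 ∧ v = 0)
  symm := by
    constructor
    intro u v ⟨h1, h2, h3⟩
    exact ⟨h1.symm, fun ⟨ha, hb⟩ => h3 ⟨hb, ha⟩, fun ⟨ha, hb⟩ => h2 ⟨hb, ha⟩⟩
  loopless := ⟨fun u h => h.1 rfl⟩

lemma g4_boot : bootStep 4 g4 = ⊤ := by
  ext u v
  simp only [SimpleGraph.top_adj]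
  constructor
  · intro h
    exact h.ne
  · intro huv
    by_cases hp : (u = 0 ∧ v = 1) ∨ (u = 1 ∧ v = 0)
    · refine Or.inr ⟨huv, Finset.univ, by simp, Finset.mem_univ _, Finset.mem_univ _, ?_⟩
      intro x _ y _ hxy hno
      refine ⟨hxy, ?_, ?_⟩
      · rintro ⟨hx0, hy1⟩
        rcases hp with ⟨hu, hv⟩ | ⟨hu, hv⟩
        · exact hno (Or.inl ⟨hx0.trans hu.symm, hy1.trans hv.symm⟩)
        · exact hno (Or.inr ⟨hx0.trans hv.symm, hy1.trans hu.symm⟩)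
      · rintro ⟨hx1, hy0⟩
        rcases hp with ⟨hu, hv⟩ | ⟨hu, hv⟩
        · exact hno (Or.inr ⟨hx1.trans hv.symm, hy0.trans hu.symm⟩)
        · exact hno (Or.inl ⟨hx1.trans hu.symm, hy0.trans hv.symm⟩)
    · exact Or.inl ⟨huv, fun h => hp (Or.inl h), fun h => hp (Or.inr h)⟩

lemma g4_ne : g4 ≠ ⊤ := by
  intro h
  have : g4.Adj 0 1 := by rw [h]; simp
  exact this.2.1 ⟨rfl, rfl⟩

lemma key : ∀ n : ℕ, 4 ≤ n → ∃ G : SimpleGraph (Fin n),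
    (bootStep 4)^[n - 3] G = ⊤ ∧ (bootStep 4)^[n - 4] G ≠ ⊤ := by
  intro n hn
  induction n, hn using Nat.le_induction with
  | base =>
      exact ⟨g4, by simpa using g4_boot, by simpa using g4_ne⟩
  | succ n hn ih =>
      obtain ⟨G, htop, hne⟩ := ih
      have hex : ∃ a b : Fin n, a ≠ b ∧ ¬ ((bootStep 4)^[n - 4] G).Adj a b := by
        by_contra h
        push_neg at h
        apply hne
        ext u v
        simp only [SimpleGraph.top_adj]
        exact ⟨fun hadj => hadj.ne, fun huv => h u v huv⟩
      obtain ⟨a, b, hab, hnadj⟩ := hex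
      have hcomm : ∀ t, t ≤ n - 3 →
          (bootStep 4)^[t] (extGraph a b G) = extGraph a b ((bootStep 4)^[t] G) := by
        intro t ht
        induction t with
        | zero => rfl
        | succ t iht =>
            rw [Function.iterate_succ_apply', iht (by omega), Function.iterate_succ_apply']
            apply bootStep_ext
            intro hadj
            exact hnadj (iter_mono G (by omega : t ≤ n - 4) hadj)
      refine ⟨extGraph a b G, ?_, ?_⟩
      · have h1 : n + 1 - 3 = (n - 3) + 1 := by omega
        rw [h1, Function.iterate_succ_apply', hcomm (n - 3) le_rfl, htop]
        exact bootStep_ext_top hab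
      · have h2 : n + 1 - 4 = n - 3 := by omega
        rw [h2, hcomm (n - 3) le_rfl, htop]
        exact ext_top_ne_top (by omega)

lemma runSet_bddAbove (r m : ℕ) :
    BddAbove {t | ∃ G : SimpleGraph (Fin m), (bootStep r)^[t] G ≠ (bootStep r)^[t - 1] G} := by
  classical
  refine ⟨Fintype.card (SimpleGraph (Fin m)), ?_⟩
  rintro t ⟨G, hG⟩
  rcases Nat.eq_zero_or_pos t with rfl | ht
  · exact Nat.zero_le _
  obtain ⟨t', rfl⟩ : ∃ t', t = t' + 1 := ⟨t - 1, by omega⟩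
  have hG' : (bootStep r)^[t' + 1] G ≠ (bootStep r)^[t'] G := by simpa using hG
  have aux : ∀ i j : ℕ, i < j → j ≤ t' + 1 → (bootStep r)^[i] G ≠ (bootStep r)^[j] G := by
    intro i j hij hj h
    have hstep : (bootStep r)^[i + 1] G = (bootStep r)^[i] G := by
      refine le_antisymm ?_ (iter_le_succ G i)
      calc (bootStep r)^[i + 1] G ≤ (bootStep r)^[j] G := iter_mono G (by omega)
        _ = (bootStep r)^[i] G := h.symm
    exact hG' ((iter_fix G hstep (t' + 1) (by omega)).trans (iter_fix G hstep t' (by omega)).symm)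
  have hinj : Function.Injective (fun i : Fin (t' + 2) => (bootStep r)^[i.val] G) := by
    intro i j hij
    by_contra hne
    rcases lt_trichotomy i.val j.val with h | h | h
    · exact aux i.val j.val h (by omega) hij
    · exact hne (Fin.ext h)
    · exact aux j.val i.val h (by omega) hij.symm
  have := Fintype.card_le_of_injective _ hinj
  simp only [Fintype.card_fin] at this
  omega

theorem maxRunTime_K4_lower :
    (∀ n : ℕ, 3 ≤ n → n - 3 ≤ maxRunTime 4 n) ∧
    (∀ n : ℕ, 4 ≤ n → ∃ G : SimpleGraph (Fin n),
      (bootStep 4)^[n - 3] G = ⊤ ∧ (bootStep 4)^[n - 3] G ≠ (bootStep 4)^[n - 4] G) := by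
  constructor
  · intro n hn
    by_cases h4 : 4 ≤ n
    · obtain ⟨G, htop, hne⟩ := key n h4
      refine le_csSup (runSet_bddAbove 4 n) ?_
      refine ⟨G, ?_⟩
      have h1 : n - 3 - 1 = n - 4 := by omega
      rw [h1, htop]
      exact fun h => hne h.symm
    · have : n = 3 := by omega
      subst this
      exact Nat.zero_le _
  · intro n hn
    obtain ⟨G, htop, hne⟩ := key n hn
    exact ⟨G, htop, by rw [htop]; exact fun h => hne h.symm⟩
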